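/- Let C_1, …, C_n > 0 and suppose μ_1, μ_2 ∈ M(ℝⁿ) with μ_1 ≥ μ_2 satisfy, for each j = 1, …, n, s(j,m) := ∫_{ℝⁿ} x_j^m dμ_1(x) = ∫_{ℝⁿ} x_j^m dμ_2(x) + c(j,m) for all m ∈ ℕ, where for every ε > 0 there is a constant A_ε > 0 with |c(j,m)| ≤ A_ε (C_j+ε)^m for all m ∈ ℕ. Suppose further that ∑_{m=1}^∞ s(j,2m)^{−1/(2m)} = ∞ for each j = 1, …, n. Then μ_1 = μ_2 + σ, where σ is a positive measure on ℝⁿ supported on [−C_1, C_1] × ⋯ × [−C_n, C_n]. -/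

import Mathlib

open MeasureTheory

/-- `μ ∈ M(ℝⁿ)`: a positive Borel measure on `ℝⁿ` all of whose absolute moments
`∫ ‖x‖^d dμ` are finite. -/
def HasAllMoments {n : ℕ} (μ : Measure (EuclideanSpace ℝ (Fin n))) : Prop :=
  ∀ d : ℝ, 0 ≤ d → Integrable (fun x : EuclideanSpace ℝ (Fin n) => ‖x‖ ^ d) μ

/-- Approximate Carleman theorem for dominated positive measures: if `μ₁ ≥ μ₂` in `M(ℝⁿ)`,
the one-dimensional marginal moments `s(j,m) = ∫ x_j^m dμ₁` satisfy
`∫ x_j^m dμ₁ = ∫ x_j^m dμ₂ + c(j,m)` with `|c(j,m)| ≤ A_ε (C_j+ε)^m` for all `ε > 0`, and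
`∑_m s(j,2m)^{-1/(2m)} = ∞` for each `j`, then `μ₁ = μ₂ + σ` with `σ` a positive measure
supported on `[-C₁,C₁] × ⋯ × [-Cₙ,Cₙ]`. -/
theorem approx_carleman_dominated {n : ℕ} (C : Fin n → ℝ) (hC : ∀ j, 0 < C j)
    (μ₁ μ₂ : Measure (EuclideanSpace ℝ (Fin n)))
    (h₁ : HasAllMoments μ₁) (h₂ : HasAllMoments μ₂) (hle : μ₂ ≤ μ₁)
    (c : Fin n → ℕ → ℝ)
    (hmom : ∀ (j : Fin n) (m : ℕ),
      ∫ x, (x j) ^ m ∂μ₁ = (∫ x, (x j) ^ m ∂μ₂) + c j m)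
    (hc : ∀ ε : ℝ, 0 < ε → ∃ A : ℝ, 0 < A ∧ ∀ (j : Fin n) (m : ℕ),
      |c j m| ≤ A * (C j + ε) ^ m)
    (hdiv : ∀ j : Fin n, ¬ Summable (fun m : ℕ =>
      (∫ x, (x j) ^ (2 * (m + 1)) ∂μ₁) ^ (-(1 : ℝ) / (2 * (m + 1))))) :
    ∃ σ : Measure (EuclideanSpace ℝ (Fin n)),
      μ₁ = μ₂ + σ ∧ σ (((WithLp.ofLp : EuclideanSpace ℝ (Fin n) → (Fin n → ℝ)) ⁻¹'
        (Set.univ.pi fun j => Set.Icc (-(C j)) (C j)))ᶜ) = 0 := by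
  classical
  -- finiteness of the measures, from the `d = 0` moment
  have hfin : ∀ μ : Measure (EuclideanSpace ℝ (Fin n)), HasAllMoments μ →
      IsFiniteMeasure μ := by
    intro μ hμ
    have h0 := hμ 0 le_rfl
    simp only [Real.rpow_zero] at h0
    exact ((integrable_const_iff).mp h0).resolve_left one_ne_zero
  haveI : IsFiniteMeasure μ₂ := hfin μ₂ h₂
  haveI : IsFiniteMeasure μ₁ := hfin μ₁ h₁
  set σ : Measure (EuclideanSpace ℝ (Fin n)) := μ₁ - μ₂ with hσdef
  have hadd : μ₁ = μ₂ + σ := by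
    rw [hσdef, add_comm]
    exact (Measure.sub_add_cancel_of_le hle).symm
  have hσle : σ ≤ μ₁ := Measure.sub_le
  haveI : IsFiniteMeasure σ := ⟨lt_of_le_of_lt (hσle Set.univ) (measure_lt_top μ₁ _)⟩
  -- coordinates are dominated by the norm
  have hcoord : ∀ (j : Fin n) (x : EuclideanSpace ℝ (Fin n)), |x j| ≤ ‖x‖ := by
    intro j x
    rw [EuclideanSpace.norm_eq]
    have h := Finset.single_le_sum (f := fun i => ‖x i‖ ^ 2) (fun i _ => sq_nonneg _)
      (Finset.mem_univ j)
    calc |x j| = Real.sqrt (‖x j‖ ^ 2) := by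
          rw [Real.sqrt_sq_eq_abs, Real.norm_eq_abs, abs_abs]
      _ ≤ _ := Real.sqrt_le_sqrt h
  have hmeas : ∀ j : Fin n, Measurable fun x : EuclideanSpace ℝ (Fin n) => x j :=
    fun j => (EuclideanSpace.proj j).continuous.measurable
  -- integrability of coordinate powers
  have hint1 : ∀ (j : Fin n) (m : ℕ),
      Integrable (fun x : EuclideanSpace ℝ (Fin n) => (x j) ^ m) μ₁ := by
    intro j m
    have hi := h₁ m (by positivity)
    refine hi.mono ((hmeas j).pow_const m).aestronglyMeasurable
      (Filter.Eventually.of_forall fun x => ?_)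
    have h1 : ‖(x j) ^ m‖ = |x j| ^ m := by rw [Real.norm_eq_abs, abs_pow]
    have h2 : ‖‖x‖ ^ (m : ℝ)‖ = ‖x‖ ^ m := by
      rw [Real.norm_eq_abs, abs_of_nonneg (Real.rpow_nonneg (norm_nonneg x) _),
        Real.rpow_natCast]
    rw [h1, h2]
    exact pow_le_pow_left₀ (abs_nonneg _) (hcoord j x) m
  have hintσ : ∀ (j : Fin n) (m : ℕ),
      Integrable (fun x : EuclideanSpace ℝ (Fin n) => (x j) ^ m) σ :=
    fun j m => (hint1 j m).mono_measure hσle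
  have hint2 : ∀ (j : Fin n) (m : ℕ),
      Integrable (fun x : EuclideanSpace ℝ (Fin n) => (x j) ^ m) μ₂ :=
    fun j m => (hint1 j m).mono_measure hle
  -- moments of σ
  have hmomσ : ∀ (j : Fin n) (m : ℕ), ∫ x, (x j) ^ m ∂σ = c j m := by
    intro j m
    have h1 := hmom j m
    rw [hadd, integral_add_measure (hint2 j m) (hintσ j m)] at h1
    linarith
  -- key: σ vanishes on {x | t ≤ |x j|} for t > C j
  have key : ∀ (j : Fin n) (t : ℝ), C j < t → σ {x | t ≤ |x j|} = 0 := by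
    intro j t ht
    have hCj := hC j
    have ht0 : 0 < t := lt_trans hCj ht
    set ε : ℝ := (t - C j) / 2 with hεdef
    have hε : 0 < ε := by rw [hεdef]; linarith
    obtain ⟨A, hA, hAc⟩ := hc ε hε
    have hr0 : 0 < C j + ε := by linarith
    have hrt : C j + ε < t := by rw [hεdef]; linarith
    set r : ℝ := (C j + ε) / t with hrdef
    have hrpos : 0 < r := div_pos hr0 ht0
    have hr1 : r < 1 := (div_lt_one ht0).mpr hrt
    set S : Set (EuclideanSpace ℝ (Fin n)) := {x | t ≤ |x j|} with hSdef
    have hb : ∀ m : ℕ, (σ S).toReal ≤ A * r ^ (2 * m) := by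
      intro m
      have hnonneg : (0 : EuclideanSpace ℝ (Fin n) → ℝ) ≤ᵐ[σ] fun x : EuclideanSpace ℝ (Fin n) => (x j) ^ (2 * m) :=
        Filter.Eventually.of_forall fun x => by
          simpa using (even_two_mul m).pow_nonneg (x j)
      have cheb := mul_meas_ge_le_integral_of_nonneg hnonneg (hintσ j (2 * m)) (t ^ (2 * m))
      have hsub : S ⊆ {x : EuclideanSpace ℝ (Fin n) | t ^ (2 * m) ≤ (x j) ^ (2 * m)} := by
        intro x hx
        have h1 : t ^ (2 * m) ≤ |x j| ^ (2 * m) := pow_le_pow_left₀ ht0.le hx _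
        rwa [(even_two_mul m).pow_abs] at h1
      have hmono : (σ S).toReal ≤
          (σ {x : EuclideanSpace ℝ (Fin n) | t ^ (2 * m) ≤ (x j) ^ (2 * m)}).toReal :=
        ENNReal.toReal_mono (measure_ne_top σ _) (measure_mono hsub)
      have hpowpos : (0 : ℝ) < t ^ (2 * m) := pow_pos ht0 _
      have h3 : t ^ (2 * m) * (σ S).toReal ≤ A * (C j + ε) ^ (2 * m) := by
        calc t ^ (2 * m) * (σ S).toReal
            ≤ t ^ (2 * m) *
              (σ {x : EuclideanSpace ℝ (Fin n) | t ^ (2 * m) ≤ (x j) ^ (2 * m)}).toReal :=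
              mul_le_mul_of_nonneg_left hmono hpowpos.le
          _ ≤ ∫ x, (x j) ^ (2 * m) ∂σ := cheb
          _ = c j (2 * m) := hmomσ j (2 * m)
          _ ≤ |c j (2 * m)| := le_abs_self _
          _ ≤ A * (C j + ε) ^ (2 * m) := hAc j (2 * m)
      have h4 : (σ S).toReal ≤ A * (C j + ε) ^ (2 * m) / t ^ (2 * m) := by
        rw [le_div_iff₀ hpowpos]
        linarith [h3]
      calc (σ S).toReal ≤ A * (C j + ε) ^ (2 * m) / t ^ (2 * m) := h4
        _ = A * r ^ (2 * m) := by rw [hrdef, div_pow, mul_div_assoc]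
    -- the bound tends to 0
    have htend : Filter.Tendsto (fun m : ℕ => A * r ^ (2 * m)) Filter.atTop (nhds 0) := by
      have h1 : Filter.Tendsto (fun k : ℕ => r ^ k) Filter.atTop (nhds 0) :=
        tendsto_pow_atTop_nhds_zero_of_lt_one hrpos.le hr1
      have h2 : Filter.Tendsto (fun m : ℕ => 2 * m) Filter.atTop Filter.atTop :=
        Filter.tendsto_atTop_mono (fun m => by simp only [id_eq]; omega) Filter.tendsto_id
      have h3 := h1.comp h2
      have := h3.const_mul A
      simpa using this
    have hle0 : (σ S).toReal ≤ 0 := ge_of_tendsto htend (Filter.Eventually.of_forall hb)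
    have heq0 : (σ S).toReal = 0 := le_antisymm hle0 ENNReal.toReal_nonneg
    exact ((ENNReal.toReal_eq_zero_iff _).mp heq0).resolve_right (measure_ne_top σ _)
  refine ⟨σ, hadd, ?_⟩
  -- cover the complement of the box by countably many bad sets
  have hcover : ((WithLp.ofLp : EuclideanSpace ℝ (Fin n) → (Fin n → ℝ)) ⁻¹'
      (Set.univ.pi fun j => Set.Icc (-(C j)) (C j)))ᶜ ⊆
      ⋃ j : Fin n, ⋃ k : ℕ,
        {x : EuclideanSpace ℝ (Fin n) | C j + 1 / ((k : ℝ) + 1) ≤ |x j|} := by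
    intro x hx
    simp only [Set.mem_compl_iff, Set.mem_preimage, Set.mem_pi, Set.mem_univ, forall_true_left,
      not_forall] at hx
    obtain ⟨j, hj⟩ := hx
    have habs : C j < |x j| := by
      rw [Set.mem_Icc, not_and_or, not_le, not_le] at hj
      rcases hj with h | h
      · calc C j = -(-(C j)) := by ring
          _ < -(x j) := by linarith
          _ ≤ |x j| := neg_le_abs _
      · exact lt_of_lt_of_le h (le_abs_self _)
    obtain ⟨k, hk⟩ := exists_nat_one_div_lt (sub_pos.mpr habs)
    refine Set.mem_iUnion.mpr ⟨j, Set.mem_iUnion.mpr ⟨k, ?_⟩⟩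
    show C j + 1 / ((k : ℝ) + 1) ≤ |x j|
    linarith
  refine measure_mono_null hcover ?_
  refine measure_iUnion_null fun j => measure_iUnion_null fun k => key j _ ?_
  have : (0 : ℝ) < 1 / ((k : ℝ) + 1) := by positivity
  linarith
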